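/- Let T_1, ..., T_n be commuting contractions on a complex Hilbert space H, let T = T_1 ⋯ T_n, and let H_1 be the maximal reducing subspace of T on which T is unitary. If K ⊆ H ⊖ H_1 is a nonzero joint reducing subspace of T_1, ..., T_n such that each T_i|_K is unitary, then a contradiction arises; hence H_1 is the maximal joint reducing subspace on which all T_i are simultaneously unitary. -/

import Mathlib

open ContinuousLinearMap Filter
open scoped InnerProductSpace

noncomputable section

variable {H : Type*} [NormedAddCommGroup H] [InnerProductSpace ℂ H] [CompleteSpace H]

/-- K is a reducing subspace for T. -/
def Reduces (T : H →L[ℂ] H) (K : Submodule ℂ H) : Prop :=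
  (∀ h ∈ K, T h ∈ K) ∧ (∀ h ∈ K, adjoint T h ∈ K)

/-- The restriction of T to K is a unitary of K (a surjective isometry of K). -/
def UnitaryOn (T : H →L[ℂ] H) (K : Submodule ℂ H) : Prop :=
  (∀ h ∈ K, ‖T h‖ = ‖h‖) ∧ (∀ h ∈ K, ∃ g ∈ K, T g = h)

/-- The restriction of T to K is a pure isometry (unilateral shift). -/
def PureIsometryOn (T : H →L[ℂ] H) (K : Submodule ℂ H) : Prop :=
  (∀ h ∈ K, ‖T h‖ = ‖h‖) ∧
    ∀ h ∈ K, Tendsto (fun n : ℕ => ((adjoint T) ^ n) h) atTop (nhds 0)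

/-- The restriction of T to K is completely non-unitary. -/
def CnuOn (T : H →L[ℂ] H) (K : Submodule ℂ H) : Prop :=
  ∀ L : Submodule ℂ H, L ≤ K → IsClosed (L : Set H) →
    Reduces T L → UnitaryOn T L → L = ⊥

/-- "S preserves K and is isometric on K". -/
def GoodOn (T : H →L[ℂ] H) (K : Submodule ℂ H) : Prop :=
  ∀ h ∈ K, T h ∈ K ∧ ‖T h‖ = ‖h‖

lemma inner_map_eq {T : H →L[ℂ] H} {K : Submodule ℂ H}
    (hiso : ∀ h ∈ K, ‖T h‖ = ‖h‖)
    {x y : H} (hx : x ∈ K) (hy : y ∈ K) : ⟪T x, T y⟫_ℂ = ⟪x, y⟫_ℂ := by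
  rw [inner_eq_sum_norm_sq_div_four (𝕜 := ℂ) (T x) (T y),
    inner_eq_sum_norm_sq_div_four (𝕜 := ℂ) x y]
  have h1 : ‖T x + T y‖ = ‖x + y‖ := by
    rw [← map_add]; exact hiso _ (K.add_mem hx hy)
  have h2 : ‖T x - T y‖ = ‖x - y‖ := by
    rw [← map_sub]; exact hiso _ (K.sub_mem hx hy)
  have h3 : ‖T x - (RCLike.I : ℂ) • T y‖ = ‖x - (RCLike.I : ℂ) • y‖ := by
    rw [← map_smul, ← map_sub]; exact hiso _ (K.sub_mem hx (K.smul_mem _ hy))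
  have h4 : ‖T x + (RCLike.I : ℂ) • T y‖ = ‖x + (RCLike.I : ℂ) • y‖ := by
    rw [← map_smul, ← map_add]; exact hiso _ (K.add_mem hx (K.smul_mem _ hy))
  rw [h1, h2, h3, h4]

/-- If K reduces T and T|K is unitary, then adjoint T preserves K and is isometric on K. -/
lemma good_adjoint {T : H →L[ℂ] H} {K : Submodule ℂ H}
    (hred : Reduces T K) (huni : UnitaryOn T K) : GoodOn (adjoint T) K := by
  intro h hh
  refine ⟨hred.2 h hh, ?_⟩
  obtain ⟨g, hg, hgT⟩ := huni.2 h hh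
  have hTg : adjoint T (T g) = g := by
    have hd : adjoint T (T g) - g ∈ K := K.sub_mem (hred.2 _ (hred.1 g hg)) hg
    have hz : ∀ k ∈ K, ⟪adjoint T (T g) - g, k⟫_ℂ = 0 := by
      intro k hk
      rw [inner_sub_left, adjoint_inner_left, inner_map_eq huni.1 hg hk, sub_self]
    have := hz _ hd
    rw [inner_self_eq_zero] at this
    rw [sub_eq_zero] at this
    exact this
  rw [← hgT, hTg, ← huni.1 g hg, hgT]

lemma good_T {T : H →L[ℂ] H} {K : Submodule ℂ H}
    (hred : Reduces T K) (huni : UnitaryOn T K) : GoodOn T K := by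
  intro h hh; exact ⟨hred.1 h hh, huni.1 h hh⟩

lemma good_one {K : Submodule ℂ H} : GoodOn (1 : H →L[ℂ] H) K := by
  intro h hh; simpa using hh

lemma good_mul {A B : H →L[ℂ] H} {K : Submodule ℂ H}
    (hA : GoodOn A K) (hB : GoodOn B K) : GoodOn (A * B) K := by
  intro h hh
  obtain ⟨hB1, hB2⟩ := hB h hh
  obtain ⟨hA1, hA2⟩ := hA _ hB1
  exact ⟨hA1, by rw [ContinuousLinearMap.mul_apply, hA2, hB2]⟩

lemma good_prod {L : List (H →L[ℂ] H)} {K : Submodule ℂ H}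
    (hL : ∀ S ∈ L, GoodOn S K) : GoodOn L.prod K := by
  induction L with
  | nil => simpa using (good_one (K := K))
  | cons S rest ih =>
      rw [List.prod_cons]
      exact good_mul (hL S (by simp)) (ih (fun S hS => hL S (by simp [hS])))

lemma good_pow {A : H →L[ℂ] H} {K : Submodule ℂ H}
    (hA : GoodOn A K) : ∀ m : ℕ, GoodOn (A ^ m) K := by
  intro m
  induction m with
  | zero => simpa [pow_zero] using (good_one (K := K))
  | succ m ih => rw [pow_succ]; exact good_mul ih hA

lemma adjoint_prod {L : List (H →L[ℂ] H)} :
    adjoint L.prod = (L.map adjoint).reverse.prod := by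
  induction L with
  | nil => simp [← star_eq_adjoint]
  | cons S rest ih =>
      rw [List.prod_cons, ← star_eq_adjoint, star_mul, star_eq_adjoint, star_eq_adjoint, ih]
      simp

theorem unitary_part_maximal_joint
    (n : ℕ) (T : Fin n → (H →L[ℂ] H))
    (hnorm : ∀ i, ‖T i‖ ≤ 1)
    (hcomm : ∀ i j, T i * T j = T j * T i)
    (H1 : Submodule ℂ H)
    (hH1 : (H1 : Set H) = {h : H | ∀ m : ℕ, 1 ≤ m →
      ‖((List.ofFn T).prod ^ m) h‖ = ‖h‖ ∧
      ‖((adjoint (List.ofFn T).prod) ^ m) h‖ = ‖h‖})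
    (K : Submodule ℂ H) (hKclosed : IsClosed (K : Set H))
    (hKne : K ≠ ⊥)
    (hKperp : K ≤ H1ᗮ)
    (hKred : ∀ i, Reduces (T i) K)
    (hKuni : ∀ i, UnitaryOn (T i) K) :
    False := by
  obtain ⟨h, hhK, hh0⟩ := Submodule.exists_mem_ne_zero_of_ne_bot hKne
  -- the product is good on K
  have hP : GoodOn (List.ofFn T).prod K := by
    apply good_prod
    intro S hS
    rw [List.mem_ofFn] at hS
    obtain ⟨i, rfl⟩ := hS
    exact good_T (hKred i) (hKuni i)
  -- the adjoint of the product is good on K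
  have hPadj : GoodOn (adjoint (List.ofFn T).prod) K := by
    rw [adjoint_prod]
    apply good_prod
    intro S hS
    rw [List.mem_reverse, List.mem_map] at hS
    obtain ⟨S', hS', rfl⟩ := hS
    rw [List.mem_ofFn] at hS'
    obtain ⟨i, rfl⟩ := hS'
    exact good_adjoint (hKred i) (hKuni i)
  -- hence h ∈ H1
  have hH1mem : h ∈ H1 := by
    rw [← SetLike.mem_coe, hH1]
    intro m _
    exact ⟨(good_pow hP m h hhK).2, (good_pow hPadj m h hhK).2⟩
  -- but h ∈ H1ᗮ, contradiction
  have : ⟪h, h⟫_ℂ = 0 := hKperp hhK h hH1mem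
  rw [inner_self_eq_zero] at this
  exact hh0 this
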